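/- Let H be a real Hilbert space and φ : H → ℝ a convex, continuous, positively 1-homogeneous function with φ(0) = 0. Identify H* with H. Then for every ς ∈ H: dist(ς, ∂φ(0)) = sup over η ∈ H with ‖η‖ ≤ 1 of (⟨ς, η⟩ − φ(η)), where dist denotes the norm distance from ς to the closed convex set ∂φ(0) = {σ ∈ H : ⟨σ, η⟩ ≤ φ(η) for all η}. -/

import Mathlib

open scoped RealInnerProductSpace

section Aux

variable {H : Type*} [NormedAddCommGroup H] [InnerProductSpace ℝ H] [CompleteSpace H]

lemma phi_subadd (φ : H → ℝ) (hconv : ConvexOn ℝ Set.univ φ)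
    (hhom : ∀ lam : ℝ, 0 < lam → ∀ v : H, φ (lam • v) = lam * φ v) (x y : H) :
    φ (x + y) ≤ φ x + φ y := by
  have h := hconv.2 (Set.mem_univ x) (Set.mem_univ y)
    (by norm_num : (0:ℝ) ≤ 1/2) (by norm_num : (0:ℝ) ≤ 1/2) (by norm_num)
  have h2 : φ (x + y) = 2 * φ ((1/2 : ℝ) • x + (1/2 : ℝ) • y) := by
    have := hhom 2 (by norm_num) ((1/2 : ℝ) • x + (1/2 : ℝ) • y)
    rw [smul_add, smul_smul, smul_smul] at this
    norm_num at this
    linarith [this]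
  simp only [smul_eq_mul] at h
  rw [h2]; linarith

/-- Hahn–Banach: existence of a supporting element of `∂φ(0)` in direction `v`. -/
lemma exists_support (φ : H → ℝ) (hφ0 : φ 0 = 0)
    (hconv : ConvexOn ℝ Set.univ φ) (hcont : Continuous φ)
    (hhom : ∀ lam : ℝ, 0 < lam → ∀ v : H, φ (lam • v) = lam * φ v) (v : H) :
    ∃ σ : H, (∀ η : H, ⟪σ, η⟫ ≤ φ η) ∧ ⟪σ, v⟫ = φ v := by
  -- the partial linear map `t • v ↦ t * φ v`
  have Hc : ∀ c : ℝ, c • v = 0 → c • (φ v) = 0 := by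
    intro c hc
    rcases smul_eq_zero.mp hc with h | h
    · simp [h]
    · simp [h, hφ0]
  set f := LinearPMap.mkSpanSingleton' (σ := RingHom.id ℝ) v (φ v) Hc with hf_def
  -- the domination hypothesis
  have hφneg : ∀ c : ℝ, c * φ v ≤ φ (c • v) := by
    intro c
    rcases lt_trichotomy c 0 with hc | hc | hc
    · have h1 : φ (c • v + (-c) • v) ≤ φ (c • v) + φ ((-c) • v) :=
        phi_subadd φ hconv hhom _ _
      have h2 : c • v + (-c) • v = 0 := by
        rw [← add_smul]; simp
      have h3 : φ ((-c) • v) = (-c) * φ v := hhom (-c) (by linarith) v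
      rw [h2, hφ0, h3] at h1
      linarith
    · simp [hc, hφ0]
    · rw [hhom c hc v]
  have hf : ∀ x : f.domain, f x ≤ φ x := by
    rintro ⟨x, hx⟩
    have hx' : x ∈ Submodule.span ℝ {v} := hx
    obtain ⟨c, rfl⟩ := Submodule.mem_span_singleton.mp hx'
    have : f ⟨c • v, hx⟩ = c • (φ v) := LinearPMap.mkSpanSingleton'_apply v (φ v) Hc c hx
    rw [this]
    simpa using hφneg c
  obtain ⟨g, hg1, hg2⟩ := exists_extension_of_le_sublinear f φ hhom
    (phi_subadd φ hconv hhom) hf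
  -- `g` is bounded
  obtain ⟨δ, hδpos, hδ⟩ : ∃ δ > 0, ∀ x : H, ‖x‖ < δ → φ x < 1 := by
    have := Metric.continuousAt_iff.mp (hcont.continuousAt (x := 0))
    obtain ⟨δ, hδpos, hδ⟩ := this 1 one_pos
    refine ⟨δ, hδpos, fun x hx => ?_⟩
    have := hδ (x := x) (by simpa using hx)
    rw [hφ0] at this
    simp only [Real.dist_eq, sub_zero] at this
    exact lt_of_abs_lt this
  have hφbound : ∀ x : H, φ x ≤ (2/δ) * ‖x‖ := by
    intro x
    rcases eq_or_ne x 0 with rfl | hx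
    · simp [hφ0]
    · have hnx : (0:ℝ) < ‖x‖ := norm_pos_iff.mpr hx
      set c : ℝ := δ / (2 * ‖x‖) with hc_def
      have hcpos : 0 < c := by positivity
      have h1 : ‖c • x‖ < δ := by
        rw [norm_smul, Real.norm_eq_abs, abs_of_pos hcpos, hc_def]
        rw [div_mul_eq_mul_div, mul_comm]
        rw [div_lt_iff₀ (by positivity)]
        nlinarith
      have h2 : φ (c • x) < 1 := hδ _ h1
      have h3 : φ (c • x) = c * φ x := hhom c hcpos x
      rw [h3] at h2
      have : φ x < 1 / c := by
        rw [lt_div_iff₀ hcpos]; linarith [h2]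
      have hcinv : 1 / c = (2/δ) * ‖x‖ := by
        rw [hc_def]
        field_simp
      linarith [hcinv ▸ this]
  have hgbound : ∀ x : H, ‖g x‖ ≤ (2/δ) * ‖x‖ := by
    intro x
    rw [Real.norm_eq_abs, abs_le]
    constructor
    · have := (hg2 (-x)).trans (hφbound (-x))
      simp only [map_neg, norm_neg] at this
      linarith
    · exact (hg2 x).trans (hφbound x)
  set G : H →L[ℝ] ℝ := g.mkContinuous (2/δ) hgbound with hG_def
  refine ⟨(InnerProductSpace.toDual ℝ H).symm G, ?_, ?_⟩
  · intro η
    have : ⟪(InnerProductSpace.toDual ℝ H).symm G, η⟫ = G η :=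
      InnerProductSpace.toDual_symm_apply
    rw [this]
    exact hg2 η
  · have h1 : ⟪(InnerProductSpace.toDual ℝ H).symm G, v⟫ = G v :=
      InnerProductSpace.toDual_symm_apply
    have hmem : v ∈ f.domain := Submodule.mem_span_singleton_self v
    have h2 : g v = f ⟨v, hmem⟩ := hg1 ⟨v, hmem⟩
    have h3 : f ⟨v, hmem⟩ = φ v :=
      LinearPMap.mkSpanSingleton'_apply_self v (φ v) Hc hmem
    rw [h1]
    show g v = φ v
    rw [h2, h3]

end Aux

/-- Duality formula: the distance of `ς` to the stable set `∂φ(0)` equals the sup over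
the unit ball of `⟨ς,η⟩ - φ(η)`, for a convex continuous positively 1-homogeneous `φ`. -/
theorem dist_to_stable_set_eq_sup
    {H : Type*} [NormedAddCommGroup H] [InnerProductSpace ℝ H] [CompleteSpace H]
    (φ : H → ℝ)
    (hφ0 : φ 0 = 0)
    (hconv : ConvexOn ℝ Set.univ φ)
    (hcont : Continuous φ)
    (hhom : ∀ lam : ℝ, 0 < lam → ∀ v : H, φ (lam • v) = lam * φ v)
    (ς : H) :
    Metric.infDist ς {σ : H | ∀ η : H, ⟪σ, η⟫ ≤ φ η} =
      sSup {r : ℝ | ∃ η : H, ‖η‖ ≤ 1 ∧ r = ⟪ς, η⟫ - φ η} := by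
  set K : Set H := {σ : H | ∀ η : H, ⟪σ, η⟫ ≤ φ η} with hK_def
  set S : Set ℝ := {r : ℝ | ∃ η : H, ‖η‖ ≤ 1 ∧ r = ⟪ς, η⟫ - φ η} with hS_def
  have hKne : K.Nonempty := by
    obtain ⟨σ, hσ, -⟩ := exists_support φ hφ0 hconv hcont hhom 0
    exact ⟨σ, hσ⟩
  have hS0 : (0:ℝ) ∈ S := ⟨0, by simp [hφ0]⟩
  have heasy : ∀ r ∈ S, ∀ σ ∈ K, r ≤ ‖ς - σ‖ := by
    rintro r ⟨η, hη, rfl⟩ σ hσ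
    have h1 : ⟪ς, η⟫ - φ η ≤ ⟪ς, η⟫ - ⟪σ, η⟫ := by
      have := hσ η; linarith
    have h2 : ⟪ς, η⟫ - ⟪σ, η⟫ = ⟪ς - σ, η⟫ := (inner_sub_left _ _ _).symm
    have h3 : ⟪ς - σ, η⟫ ≤ ‖ς - σ‖ * ‖η‖ := real_inner_le_norm _ _
    have h4 : ‖ς - σ‖ * ‖η‖ ≤ ‖ς - σ‖ * 1 :=
      mul_le_mul_of_nonneg_left hη (norm_nonneg _)
    rw [mul_one] at h4
    linarith
  obtain ⟨σK, hσK⟩ := hKne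
  have hbdd : BddAbove S := ⟨‖ς - σK‖, fun r hr => heasy r hr σK hσK⟩
  have hKconv : Convex ℝ K := by
    intro σ₁ h1 σ₂ h2 a b ha hb hab
    intro η
    have e : ⟪a • σ₁ + b • σ₂, η⟫ = a * ⟪σ₁, η⟫ + b * ⟪σ₂, η⟫ := by
      rw [inner_add_left, real_inner_smul_left, real_inner_smul_left]
    rw [e]
    calc a * ⟪σ₁, η⟫ + b * ⟪σ₂, η⟫ ≤ a * φ η + b * φ η := by
          gcongr <;> [exact h1 η; exact h2 η]
      _ = φ η := by rw [← add_mul, hab, one_mul]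
  have hKclosed : IsClosed K := by
    have : K = ⋂ η : H, {σ : H | ⟪σ, η⟫ ≤ φ η} := by
      ext σ; simp [hK_def, Set.mem_iInter]
    rw [this]
    exact isClosed_iInter fun η =>
      isClosed_le (Continuous.inner continuous_id continuous_const) continuous_const
  refine le_antisymm ?_ ?_
  · -- infDist ≤ sSup
    obtain ⟨σ₀, hσ₀K, hmin⟩ :=
      exists_norm_eq_iInf_of_complete_convex ⟨σK, hσK⟩ hKclosed.isComplete hKconv ς
    have hvar : ∀ w ∈ K, ⟪ς - σ₀, w - σ₀⟫ ≤ 0 :=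
      (norm_eq_iInf_iff_real_inner_le_zero hKconv hσ₀K).mp hmin
    set v : H := ς - σ₀ with hv_def
    obtain ⟨σ, hσmem, hσv⟩ := exists_support φ hφ0 hconv hcont hhom v
    have hkey : φ v ≤ ⟪σ₀, v⟫ := by
      have h1 : ⟪v, σ - σ₀⟫ ≤ 0 := hvar σ hσmem
      have h2 : ⟪v, σ⟫ - ⟪v, σ₀⟫ ≤ 0 := by
        rw [← inner_sub_right]; exact h1
      have h3 : ⟪σ, v⟫ = ⟪v, σ⟫ := real_inner_comm _ _
      have h4 : ⟪σ₀, v⟫ = ⟪v, σ₀⟫ := real_inner_comm _ _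
      rw [← hσv, h3, h4]
      linarith
    have hdist : Metric.infDist ς K ≤ ‖v‖ := by
      have := Metric.infDist_le_dist_of_mem (x := ς) hσ₀K
      rwa [dist_eq_norm] at this
    rcases eq_or_ne v 0 with hv0 | hv0
    · calc Metric.infDist ς K ≤ ‖v‖ := hdist
        _ = 0 := by rw [hv0, norm_zero]
        _ ≤ sSup S := le_csSup_of_le hbdd hS0 le_rfl
    · have hnv : (0:ℝ) < ‖v‖ := norm_pos_iff.mpr hv0
      set η : H := ‖v‖⁻¹ • v with hη_def
      have hηnorm : ‖η‖ = 1 := by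
        rw [hη_def, norm_smul, Real.norm_eq_abs, abs_of_pos (by positivity)]
        field_simp
      have hmemS : ⟪ς, η⟫ - φ η ∈ S := ⟨η, le_of_eq hηnorm, rfl⟩
      have hφη : φ η = ‖v‖⁻¹ * φ v := hhom _ (by positivity) v
      have hinner : ⟪ς, η⟫ = ‖v‖⁻¹ * ⟪ς, v⟫ := real_inner_smul_right _ _ _
      have hlb : ‖v‖ ≤ ⟪ς, η⟫ - φ η := by
        rw [hinner, hφη, ← mul_sub]
        have h1 : ⟪ς, v⟫ - φ v ≥ ⟪ς, v⟫ - ⟪σ₀, v⟫ := by linarith [hkey]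
        have h2 : ⟪ς, v⟫ - ⟪σ₀, v⟫ = ⟪v, v⟫ := by
          rw [← inner_sub_left]
        have h3 : ⟪v, v⟫ = ‖v‖ ^ 2 := real_inner_self_eq_norm_sq v
        have h4 : ‖v‖⁻¹ * (⟪ς, v⟫ - φ v) ≥ ‖v‖⁻¹ * (‖v‖ ^ 2) := by
          apply mul_le_mul_of_nonneg_left _ (by positivity)
          rw [← h3, ← h2]; linarith
        have h5 : ‖v‖⁻¹ * (‖v‖ ^ 2) = ‖v‖ := by
          field_simp
        linarith [h4, h5 ▸ h4]
      calc Metric.infDist ς K ≤ ‖v‖ := hdist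
        _ ≤ ⟪ς, η⟫ - φ η := hlb
        _ ≤ sSup S := le_csSup hbdd hmemS
  · -- sSup ≤ infDist
    apply Real.sSup_le _ Metric.infDist_nonneg
    intro r hr
    by_contra h
    push_neg at h
    obtain ⟨σ, hσ, hlt⟩ := (Metric.infDist_lt_iff ⟨σK, hσK⟩).mp h
    rw [dist_eq_norm] at hlt
    exact absurd (heasy r hr σ hσ) (not_le.mpr hlt)
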